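/- Let U be an encoding for g₁,…,g_p with scalars μ₁,…,μ_p. Then for every error element e, setting s := (⟨g₁,e⟩,…,⟨g_p,e⟩) ∈ (Fin p → ZMod d), there exists a family of unitary d^{N−p} × d^{N−p} matrices (T_x)_{x ∈ Fin p → ZMod d} (indexed by Fin (N−p) → ZMod d) such that for all x, x', k, k': the ((x',k'),(x,k)) entry of U† W(e) U equals (T_{x+s})_{k',k} if x' = x + s, and 0 otherwise. -/

import Mathlib

open Matrix Complex

noncomputable section

/-- ω = exp(2πi/d). -/
def omga (d : ℕ) : ℂ := Complex.exp (2 * Real.pi * Complex.I / d)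

/-- The Weyl operator W_{k,l}: (j,j') entry is ω^{jk} if j' = j + l, else 0. -/
def weyl (d : ℕ) (k l : ZMod d) : Matrix (ZMod d) (ZMod d) ℂ :=
  Matrix.of fun j j' => if j' = j + l then omga d ^ (j * k).val else 0

/-- N-fold Kronecker product W(e), indexed by Fin N → ZMod d. -/
def weylN (d N : ℕ) (e : (Fin N → ZMod d) × (Fin N → ZMod d)) :
    Matrix (Fin N → ZMod d) (Fin N → ZMod d) ℂ :=
  Matrix.of fun j j' => ∏ n, weyl d (e.1 n) (e.2 n) (j n) (j' n)

/-- Symplectic product ⟨e,f⟩ = Σₙ (lₙ mₙ − kₙ nₙ). -/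
def symp (d N : ℕ) (e f : (Fin N → ZMod d) × (Fin N → ZMod d)) : ZMod d :=
  ∑ n, (e.2 n * f.1 n - e.1 n * f.2 n)

section Helpers
variable {d N : ℕ} [NeZero d]

lemma omga_prim : IsPrimitiveRoot (omga d) d :=
  Complex.isPrimitiveRoot_exp d (NeZero.ne d)

lemma omga_pow_d : omga d ^ d = 1 := omga_prim.pow_eq_one

lemma omga_pow_mod (n : ℕ) : omga d ^ (n % d) = omga d ^ n := by
  conv_rhs => rw [← Nat.mod_add_div n d]
  rw [pow_add, pow_mul, omga_pow_d, one_pow, mul_one]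

lemma omga_pow_val_add (a b : ZMod d) :
    omga d ^ (a + b).val = omga d ^ a.val * omga d ^ b.val := by
  rw [← pow_add, ZMod.val_add, omga_pow_mod]

lemma omga_abs : ‖omga d‖ = 1 := by
  have : (2 * (Real.pi : ℂ) * Complex.I / d) = ((2 * Real.pi / d : ℝ) : ℂ) * Complex.I := by
    push_cast; ring
  rw [omga, this, Complex.norm_exp_ofReal_mul_I]

lemma omga_ne_zero : omga d ≠ 0 := Complex.exp_ne_zero _

lemma omga_val_inj {a b : ZMod d} (h : omga d ^ a.val = omga d ^ b.val) : a = b :=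
  ZMod.val_injective d (omga_prim.pow_inj (ZMod.val_lt a) (ZMod.val_lt b) h)

lemma omga_pow_val_sum {ι : Type*} (s : Finset ι) (f : ι → ZMod d) :
    omga d ^ (∑ i ∈ s, f i).val = ∏ i ∈ s, omga d ^ (f i).val := by
  classical
  induction s using Finset.cons_induction with
  | empty => simp
  | cons a s ha ih => rw [Finset.sum_cons, Finset.prod_cons, omga_pow_val_add, ih]

lemma conj_omga_pow_mul_self (n : ℕ) :
    (starRingEnd ℂ) (omga d ^ n) * omga d ^ n = 1 := by
  rw [map_pow, ← Complex.inv_eq_conj omga_abs, inv_pow,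
    inv_mul_cancel₀ (pow_ne_zero _ omga_ne_zero)]

lemma weylN_apply (e : (Fin N → ZMod d) × (Fin N → ZMod d)) (j j' : Fin N → ZMod d) :
    weylN d N e j j' =
      if j' = j + e.2 then omga d ^ (∑ n, j n * e.1 n).val else 0 := by
  simp only [weylN, Matrix.of_apply]
  by_cases h : j' = j + e.2
  · simp only [h, if_true]
    rw [omga_pow_val_sum Finset.univ (fun n => j n * e.1 n)]
    refine Finset.prod_congr rfl fun n _ => ?_
    simp [weyl, h, Pi.add_apply]
  · simp only [h, if_false]
    obtain ⟨n, hn⟩ := Function.ne_iff.mp h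
    refine Finset.prod_eq_zero (Finset.mem_univ n) ?_
    simp only [weyl, Matrix.of_apply]
    rw [if_neg]
    exact fun hc => hn (by simpa using hc)


lemma weylN_mul_apply (f e : (Fin N → ZMod d) × (Fin N → ZMod d)) (j j'' : Fin N → ZMod d) :
    (weylN d N f * weylN d N e) j j'' =
      if j'' = j + (f.2 + e.2)
      then omga d ^ ((∑ n, j n * f.1 n) + ∑ n, (j n + f.2 n) * e.1 n).val else 0 := by
  rw [Matrix.mul_apply]
  simp only [weylN_apply, ite_mul, zero_mul]
  rw [Finset.sum_ite_eq' Finset.univ (j + f.2)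
    (fun j' => omga d ^ (∑ n, j n * f.1 n).val
      * if j'' = j' + e.2 then omga d ^ (∑ n, j' n * e.1 n).val else 0)]
  simp only [Finset.mem_univ, if_true]
  rw [omga_pow_val_add]
  by_cases h : j'' = j + (f.2 + e.2)
  · rw [if_pos h, if_pos (by rw [h, add_assoc])]
    simp [Pi.add_apply]
  · rw [if_neg h, if_neg (fun hc => h (by rw [hc, add_assoc])), mul_zero]

lemma weylN_comm (f e : (Fin N → ZMod d) × (Fin N → ZMod d)) :
    weylN d N f * weylN d N e
      = omga d ^ (symp d N f e).val • (weylN d N e * weylN d N f) := by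
  ext j j''
  rw [Matrix.smul_apply, weylN_mul_apply, weylN_mul_apply, add_comm e.2 f.2]
  by_cases h : j'' = j + (f.2 + e.2)
  · rw [if_pos h, if_pos h, smul_eq_mul, ← omga_pow_val_add]
    congr 1
    congr 1
    simp only [symp, ← Finset.sum_add_distrib]
    refine Finset.sum_congr rfl fun n _ => ?_
    ring
  · rw [if_neg h, if_neg h, smul_zero]


lemma weylN_unitary (e : (Fin N → ZMod d) × (Fin N → ZMod d)) :
    weylN d N e ∈ Matrix.unitaryGroup (Fin N → ZMod d) ℂ := by
  rw [Matrix.mem_unitaryGroup_iff']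
  ext i i'
  rw [Matrix.mul_apply, Matrix.one_apply]
  simp only [Matrix.star_apply, Matrix.conjTranspose_apply, weylN_apply]
  rw [Finset.sum_eq_single (i - e.2)]
  · rw [sub_add_cancel]
    rw [if_pos rfl]
    by_cases h : i = i'
    · rw [if_pos h.symm, if_pos h]
      exact conj_omga_pow_mul_self _
    · rw [if_neg (fun hc => h hc.symm), if_neg h, mul_zero]
  · intro j _ hj
    rw [if_neg (fun hc => hj (by rw [hc, add_sub_cancel_right])),
      star_zero, zero_mul]
  · intro hmem; exact absurd (Finset.mem_univ _) hmem

end Helpers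

/-- `U` is an encoding for the error elements `g j` with unimodular scalars `μ j`, with
columns indexed by pairs `(x,k)` via the fixed bijection `ι`: each column
`u_{x,k} = U · e_{ι(x,k)}` is an eigenvector of `W(g j)` with eigenvalue `μ j · ω^{x j}`. -/
def IsEncoding (d N p : ℕ) [NeZero d]
    (g : Fin p → (Fin N → ZMod d) × (Fin N → ZMod d)) (μ : Fin p → ℂ)
    (ι : ((Fin p → ZMod d) × (Fin (N - p) → ZMod d)) ≃ (Fin N → ZMod d))
    (U : Matrix (Fin N → ZMod d) (Fin N → ZMod d) ℂ) : Prop :=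
  ∀ (j : Fin p) (x : Fin p → ZMod d) (k : Fin (N - p) → ZMod d),
    (weylN d N (g j)).mulVec (fun r => U r (ι (x, k))) =
      (μ j * omga d ^ (x j).val) • (fun r => U r (ι (x, k)))

/-- block decomposition of U† W(e) U for an encoding U: there is a family of
unitary action operators (T_x) such that the ((x',k'),(x,k)) entry of U† W(e) U equals
(T_{x+s})_{k',k} if x' = x + s (with s_j = ⟨g_j,e⟩), and 0 otherwise. -/
theorem encoding_error_action
    (d N p : ℕ) [NeZero d] (hd : d.Prime) (hN : 1 ≤ N) (hp : p ≤ N)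
    (g : Fin p → (Fin N → ZMod d) × (Fin N → ZMod d))
    (μ : Fin p → ℂ) (hμ : ∀ j, ‖μ j‖ = 1)
    (ι : ((Fin p → ZMod d) × (Fin (N - p) → ZMod d)) ≃ (Fin N → ZMod d))
    (U : Matrix (Fin N → ZMod d) (Fin N → ZMod d) ℂ)
    (hU : U ∈ Matrix.unitaryGroup (Fin N → ZMod d) ℂ)
    (hEnc : IsEncoding d N p g μ ι U)
    (e : (Fin N → ZMod d) × (Fin N → ZMod d)) :
    ∃ T : (Fin p → ZMod d) →
        Matrix (Fin (N - p) → ZMod d) (Fin (N - p) → ZMod d) ℂ,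
      (∀ x, T x ∈ Matrix.unitaryGroup (Fin (N - p) → ZMod d) ℂ) ∧
      ∀ (x x' : Fin p → ZMod d) (k k' : Fin (N - p) → ZMod d),
        (Uᴴ * weylN d N e * U) (ι (x', k')) (ι (x, k)) =
          if x' = x + (fun j => symp d N (g j) e)
          then T (x + fun j => symp d N (g j) e) k' k else 0 := by
  classical
  set s : Fin p → ZMod d := fun j => symp d N (g j) e with hs
  set M : Matrix (Fin N → ZMod d) (Fin N → ZMod d) ℂ := Uᴴ * weylN d N e * U with hMdef
  have hM : M ∈ Matrix.unitaryGroup (Fin N → ZMod d) ℂ := by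
    rw [hMdef, ← Matrix.star_eq_conjTranspose]
    exact mul_mem (mul_mem (Unitary.star_mem hU) (weylN_unitary e)) hU
  -- the transformed columns v x k = W(e) u_{x,k}
  set v : (Fin p → ZMod d) → (Fin (N - p) → ZMod d) → (Fin N → ZMod d) → ℂ :=
    fun x k => (weylN d N e).mulVec (fun r => U r (ι (x, k))) with hv
  have hMentry : ∀ x' k' x k,
      M (ι (x', k')) (ι (x, k)) = star (fun r => U r (ι (x', k'))) ⬝ᵥ v x k := by
    intro x' k' x k
    rw [hMdef, mul_assoc, Matrix.mul_apply]
    simp [dotProduct, Matrix.conjTranspose_apply, Matrix.mul_apply, Matrix.mulVec, hv]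
  have hEigV : ∀ (j : Fin p) x k,
      (weylN d N (g j)).mulVec (v x k)
        = (μ j * omga d ^ (x j + s j).val) • v x k := by
    intro j x k
    rw [hv, Matrix.mulVec_mulVec, weylN_comm, Matrix.smul_mulVec,
      ← Matrix.mulVec_mulVec, hEnc j x k, Matrix.mulVec_smul, smul_smul]
    congr 1
    simp only [hs]
    rw [omga_pow_val_add]
    ring
  -- orthogonality off the shifted block
  have horth : ∀ (x x' : Fin p → ZMod d) k k', x' ≠ x + s → M (ι (x', k')) (ι (x, k)) = 0 := by
    intro x x' k k' hne
    obtain ⟨j0, hj0⟩ := Function.ne_iff.mp hne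
    set A := weylN d N (g j0) with hA
    set u' : (Fin N → ZMod d) → ℂ := fun r => U r (ι (x', k')) with hu'
    set lam' : ℂ := μ j0 * omga d ^ (x' j0).val with hlam'
    set lam : ℂ := μ j0 * omga d ^ (x j0 + s j0).val with hlam
    have h1 : A.mulVec u' = lam' • u' := hEnc j0 x' k'
    have h2 : A.mulVec (v x k) = lam • v x k := hEigV j0 x k
    have hAu : star A * A = 1 := Matrix.mem_unitaryGroup_iff'.mp (weylN_unitary _)
    have key : star (A.mulVec u') ⬝ᵥ (A.mulVec (v x k)) = star u' ⬝ᵥ v x k := by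
      rw [Matrix.star_mulVec, Matrix.dotProduct_mulVec, Matrix.vecMul_vecMul,
        ← Matrix.star_eq_conjTranspose, hAu, Matrix.vecMul_one]
    have key2 : (star lam' * lam) * (star u' ⬝ᵥ v x k) = star u' ⬝ᵥ v x k := by
      conv_rhs => rw [← key]
      rw [h1, h2, star_smul, smul_dotProduct, dotProduct_smul,
        smul_eq_mul, smul_eq_mul]
      ring
    have hlamnorm : lam' * star lam' = 1 := by
      have habs : ‖lam'‖ = 1 := by
        have h0 := hμ j0
        simp [hlam', _root_.map_mul, map_pow, omga_abs, h0]
      rw [Complex.star_def, Complex.mul_conj, Complex.normSq_eq_norm_sq, habs]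
      norm_num
    have hne1 : star lam' * lam ≠ 1 := by
      intro hcontra
      have hlameq : lam = lam' := by
        calc lam = (lam' * star lam') * lam := by rw [hlamnorm, one_mul]
        _ = lam' * (star lam' * lam) := by ring
        _ = lam' := by rw [hcontra, mul_one]
      have hμne : μ j0 ≠ 0 := by
        intro h0; have := hμ j0; rw [h0] at this; simp at this
      have : omga d ^ (x j0 + s j0).val = omga d ^ (x' j0).val :=
        mul_left_cancel₀ hμne (by rw [← hlam, ← hlam', hlameq])
      exact hj0 (by rw [Pi.add_apply, ← omga_val_inj this])
    have hz : (star lam' * lam - 1) * (star u' ⬝ᵥ v x k) = 0 := by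
      linear_combination key2
    rcases mul_eq_zero.mp hz with h | h
    · exact absurd (by linear_combination h) hne1
    · rw [hMentry]; exact h
  -- the block operators
  refine ⟨fun y => Matrix.of fun k' k => M (ι (y, k')) (ι (y - s, k)), ?_, ?_⟩
  · intro y
    rw [Matrix.mem_unitaryGroup_iff']
    ext k' k
    have hMM : star M * M = 1 := Matrix.mem_unitaryGroup_iff'.mp hM
    have h : (star M * M) (ι (y - s, k')) (ι (y - s, k))
        = (1 : Matrix (Fin N → ZMod d) (Fin N → ZMod d) ℂ) (ι (y - s, k')) (ι (y - s, k)) := by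
      rw [hMM]
    rw [Matrix.mul_apply] at h
    simp only [Matrix.star_apply] at h
    rw [← Equiv.sum_comp ι (fun r => star (M r (ι (y - s, k'))) * M r (ι (y - s, k))),
      Fintype.sum_prod_type] at h
    rw [Finset.sum_eq_single y] at h
    · rw [Matrix.mul_apply]
      simp only [Matrix.star_apply, Matrix.of_apply]
      rw [h, Matrix.one_apply, Matrix.one_apply]
      by_cases hkk : k' = k
      · rw [if_pos hkk, if_pos (by rw [hkk])]
      · rw [if_neg hkk, if_neg (fun hc => hkk (by simpa [Prod.ext_iff] using ι.injective hc))]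
    · intro z _ hz
      refine Finset.sum_eq_zero fun m _ => ?_
      rw [horth (y - s) z k m (by rw [sub_add_cancel]; exact hz), mul_zero]
    · intro hmem; exact absurd (Finset.mem_univ _) hmem
  · intro x x' k k'
    by_cases h : x' = x + s
    · rw [if_pos h, h]
      simp only [Matrix.of_apply, add_sub_cancel_right]
    · rw [if_neg h]
      exact horth x x' k k' h

end
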